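/- Let G' be a connected simple graph with a distinguished vertex w, and let G be the connected graph obtained from G' by attaching k ≥ 2 new pendant vertices, labeled 1,…,k, each adjacent only to w. Let Δ be the distance squared matrix of G, let Δ_k be the distance squared matrix of the graph G \ {1,…,k−1} (G with all but one of the new pendant vertices deleted), indexed so that the remaining pendant vertex is vertex k, and let e_k denote the standard basis (indicator) vector of vertex k. Then i_-(Δ) = (k − 1) + i_-( Δ_k + (4 − 4/k)·e_k e_k^T ). -/

import Mathlib

open Matrix

/-- The distance squared matrix of a graph. -/
noncomputable def distSqMatrix {V : Type*} [Fintype V] (G : SimpleGraph V) :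
    Matrix V V ℝ := Matrix.of fun i j => ((G.dist i j : ℝ)) ^ 2

/-- number of positive eigenvalues (with multiplicity) of a real symmetric matrix -/
noncomputable def iPos {V : Type*} [Fintype V] [DecidableEq V] (M : Matrix V V ℝ) : ℕ :=
  if h : M.IsHermitian then (Finset.univ.filter fun i => 0 < h.eigenvalues i).card else 0

/-- number of negative eigenvalues (with multiplicity) of a real symmetric matrix -/
noncomputable def iNeg {V : Type*} [Fintype V] [DecidableEq V] (M : Matrix V V ℝ) : ℕ :=
  if h : M.IsHermitian then (Finset.univ.filter fun i => h.eigenvalues i < 0).card else 0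

/-- multiplicity of 0 as an eigenvalue of a real symmetric matrix -/
noncomputable def iZero {V : Type*} [Fintype V] [DecidableEq V] (M : Matrix V V ℝ) : ℕ :=
  if h : M.IsHermitian then (Finset.univ.filter fun i => h.eigenvalues i = 0).card else 0

/-! ### Auxiliary linear algebra: inertia via maximal negative/nonnegative subspaces -/

section Key

open Module

variable {E : Type*} [AddCommGroup E] [Module ℝ E] [FiniteDimensional ℝ E]

lemma aux_key_le (Q : E → ℝ) {Wn Wn' Wp' : Submodule ℝ E}
    (h1 : ∀ x ∈ Wn, x ≠ 0 → Q x < 0)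
    (h2' : ∀ x ∈ Wp', 0 ≤ Q x)
    (hd' : finrank ℝ E ≤ finrank ℝ Wn' + finrank ℝ Wp') :
    finrank ℝ Wn ≤ finrank ℝ Wn' := by
  have hdisj : Wn ⊓ Wp' = ⊥ := by
    rw [Submodule.eq_bot_iff]
    intro x hx
    by_contra hx0
    exact absurd (h2' x hx.2) (not_le.mpr (h1 x hx.1 hx0))
  have := Submodule.finrank_sup_add_finrank_inf_eq Wn Wp'
  rw [hdisj] at this
  have hle : finrank ℝ ↥(Wn ⊔ Wp') ≤ finrank ℝ E := Submodule.finrank_le _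
  simp only [finrank_bot, add_zero] at this
  omega

lemma aux_key_eq (Q : E → ℝ) {Wn Wp Wn' Wp' : Submodule ℝ E}
    (h1 : ∀ x ∈ Wn, x ≠ 0 → Q x < 0)
    (h2 : ∀ x ∈ Wp, 0 ≤ Q x)
    (h1' : ∀ x ∈ Wn', x ≠ 0 → Q x < 0)
    (h2' : ∀ x ∈ Wp', 0 ≤ Q x)
    (hd : finrank ℝ E ≤ finrank ℝ Wn + finrank ℝ Wp)
    (hd' : finrank ℝ E ≤ finrank ℝ Wn' + finrank ℝ Wp') :
    finrank ℝ Wn = finrank ℝ Wn' :=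
  le_antisymm (aux_key_le Q h1 h2' hd') (aux_key_le Q h1' h2 hd)

/-- The submodule `p.prod q` is linearly equivalent to `p × q`. -/
def auxProdEquiv {M N : Type*} [AddCommGroup M] [Module ℝ M] [AddCommGroup N] [Module ℝ N]
    (p : Submodule ℝ M) (q : Submodule ℝ N) : (p.prod q) ≃ₗ[ℝ] p × q where
  toFun z := (⟨z.1.1, z.2.1⟩, ⟨z.1.2, z.2.2⟩)
  invFun z := ⟨(z.1.1, z.2.1), ⟨z.1.2, z.2.2⟩⟩
  map_add' := by intros; rfl
  map_smul' := by intros; rfl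
  left_inv := by intro z; rfl
  right_inv := by intro z; rfl

lemma finrank_prod_submodule {M N : Type*} [AddCommGroup M] [Module ℝ M] [AddCommGroup N]
    [Module ℝ N] [FiniteDimensional ℝ M] [FiniteDimensional ℝ N]
    (p : Submodule ℝ M) (q : Submodule ℝ N) :
    finrank ℝ (p.prod q) = finrank ℝ p + finrank ℝ q := by
  rw [LinearEquiv.finrank_eq (auxProdEquiv p q), Module.finrank_prod]

end Key

section Supp

open Module

variable {V : Type*} [Fintype V] [DecidableEq V]

/-- Functions supported on a finset, as a submodule. -/
def suppSub (s : Finset V) : Submodule ℝ (V → ℝ) where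
  carrier := {c | ∀ i ∉ s, c i = 0}
  add_mem' := by intro a b ha hb i hi; simp [ha i hi, hb i hi]
  zero_mem' := by intro i _; rfl
  smul_mem' := by intro c a ha i hi; simp [ha i hi]

lemma mem_suppSub {s : Finset V} {c : V → ℝ} : c ∈ suppSub s ↔ ∀ i ∉ s, c i = 0 := Iff.rfl

noncomputable def suppSubEquiv (s : Finset V) : suppSub s ≃ₗ[ℝ] (↥s → ℝ) where
  toFun c := fun i => (c : V → ℝ) i
  invFun d := ⟨fun i => if h : i ∈ s then d ⟨i, h⟩ else 0, by
    intro i hi; simp [hi]⟩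
  map_add' := by intros; rfl
  map_smul' := by intros; rfl
  left_inv := by
    rintro ⟨c, hc⟩
    ext i
    by_cases h : i ∈ s <;> simp [h]
    exact (hc i h).symm
  right_inv := by
    intro d
    ext i
    simp

omit [Fintype V] in
lemma finrank_suppSub (s : Finset V) : finrank ℝ (suppSub s) = s.card := by
  rw [LinearEquiv.finrank_eq (suppSubEquiv s), Module.finrank_pi, Fintype.card_coe]

end Supp

section Spec

open Module

variable {V : Type*} [Fintype V] [DecidableEq V] {M : Matrix V V ℝ}

lemma quad_eval (hM : M.IsHermitian) (c : V → ℝ) :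
    ((hM.eigenvectorUnitary : Matrix V V ℝ) *ᵥ c) ⬝ᵥ
      (M *ᵥ ((hM.eigenvectorUnitary : Matrix V V ℝ) *ᵥ c)) =
    ∑ i, hM.eigenvalues i * c i ^ 2 := by
  set U := (hM.eigenvectorUnitary : Matrix V V ℝ) with hU
  have hdiag : star U * M * U = diagonal hM.eigenvalues := by
    have := hM.conjStarAlgAut_star_eigenvectorUnitary
    simpa using this
  have h1 : U *ᵥ c = c ᵥ* Uᵀ := (vecMul_transpose U c).symm
  have hstar : Uᵀ = star U := by
    rw [Matrix.star_eq_conjTranspose, conjTranspose]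
    ext i j
    simp
  calc (U *ᵥ c) ⬝ᵥ (M *ᵥ (U *ᵥ c))
      = (U *ᵥ c) ᵥ* M ⬝ᵥ (U *ᵥ c) := by rw [dotProduct_mulVec]
    _ = ((U *ᵥ c) ᵥ* M) ᵥ* U ⬝ᵥ c := by rw [dotProduct_mulVec]
    _ = (c ᵥ* (star U * M * U)) ⬝ᵥ c := by
        rw [h1, vecMul_vecMul, vecMul_vecMul, hstar, mul_assoc]
    _ = (c ᵥ* diagonal hM.eigenvalues) ⬝ᵥ c := by rw [hdiag]
    _ = ∑ i, hM.eigenvalues i * c i ^ 2 := by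
        simp only [dotProduct, vecMul_diagonal]
        congr 1; ext i; ring

/-- The spectral construction: subspaces witnessing the inertia of a symmetric matrix. -/
lemma spec_subspaces (hM : M.IsHermitian) :
    ∃ Wn Wp : Submodule ℝ (V → ℝ),
      (∀ x ∈ Wn, x ≠ 0 → x ⬝ᵥ (M *ᵥ x) < 0) ∧
      (∀ x ∈ Wp, 0 ≤ x ⬝ᵥ (M *ᵥ x)) ∧
      finrank ℝ Wn = iNeg M ∧
      finrank ℝ Wn + finrank ℝ Wp = Fintype.card V := by
  classical
  set U := (hM.eigenvectorUnitary : Matrix V V ℝ) with hUdef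
  have hUinj : Function.Injective U.mulVecLin := by
    intro a b hab
    have h2 : star U * U = 1 := ((Unitary.mem_iff).mp hM.eigenvectorUnitary.prop).1
    have : ∀ c, star U *ᵥ (U *ᵥ c) = c := by
      intro c; rw [mulVec_mulVec, h2, one_mulVec]
    calc a = star U *ᵥ (U *ᵥ a) := (this a).symm
      _ = star U *ᵥ (U *ᵥ b) := by simp only [mulVecLin_apply] at hab; rw [hab]
      _ = b := this b
  set sn : Finset V := Finset.univ.filter fun i => hM.eigenvalues i < 0 with hsn
  set sp : Finset V := Finset.univ.filter fun i => ¬ hM.eigenvalues i < 0 with hsp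
  refine ⟨(suppSub sn).map U.mulVecLin, (suppSub sp).map U.mulVecLin, ?_, ?_, ?_, ?_⟩
  · rintro x hx hx0
    obtain ⟨c, hc, rfl⟩ := hx
    replace hc : ∀ i ∉ sn, c i = 0 := mem_suppSub.mp hc
    have hc0 : c ≠ 0 := by rintro rfl; simp at hx0
    obtain ⟨i0, hi0⟩ := Function.ne_iff.mp hc0
    have hi0mem : i0 ∈ sn := by
      by_contra h; exact hi0 (hc i0 h)
    rw [mulVecLin_apply, quad_eval hM]
    have : ∀ i ∈ Finset.univ, hM.eigenvalues i * c i ^ 2 ≤ 0 := by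
      intro i _
      by_cases h : i ∈ sn
      · have : hM.eigenvalues i < 0 := by simpa [hsn] using h
        nlinarith [sq_nonneg (c i)]
      · rw [hc i h]; simp
    calc ∑ i, hM.eigenvalues i * c i ^ 2 < ∑ _i : V, (0:ℝ) := by
          apply Finset.sum_lt_sum this
          refine ⟨i0, Finset.mem_univ _, ?_⟩
          have hneg : hM.eigenvalues i0 < 0 := by simpa [hsn] using hi0mem
          have : (0:ℝ) < c i0 ^ 2 := pow_two_pos_of_ne_zero hi0
          nlinarith
      _ = 0 := by simp
  · rintro x hx
    obtain ⟨c, hc, rfl⟩ := hx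
    replace hc : ∀ i ∉ sp, c i = 0 := mem_suppSub.mp hc
    rw [mulVecLin_apply, quad_eval hM]
    apply Finset.sum_nonneg
    intro i _
    by_cases h : i ∈ sp
    · have : ¬ hM.eigenvalues i < 0 := by simpa [hsp] using h
      nlinarith [sq_nonneg (c i), not_lt.mp this]
    · rw [hc i h]; simp
  · rw [← LinearEquiv.finrank_eq (Submodule.equivMapOfInjective _ hUinj _), finrank_suppSub]
    rw [iNeg, dif_pos hM]
  · rw [← LinearEquiv.finrank_eq (Submodule.equivMapOfInjective _ hUinj (suppSub sn)),
      ← LinearEquiv.finrank_eq (Submodule.equivMapOfInjective _ hUinj (suppSub sp)),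
      finrank_suppSub, finrank_suppSub, hsn, hsp]
    exact Finset.card_filter_add_card_filter_not _ |>.trans (Finset.card_univ)

lemma iNeg_eq_finrank (hM : M.IsHermitian) {Wn Wp : Submodule ℝ (V → ℝ)}
    (h1 : ∀ x ∈ Wn, x ≠ 0 → x ⬝ᵥ (M *ᵥ x) < 0)
    (h2 : ∀ x ∈ Wp, 0 ≤ x ⬝ᵥ (M *ᵥ x))
    (hd : Fintype.card V ≤ finrank ℝ Wn + finrank ℝ Wp) :
    iNeg M = finrank ℝ Wn := by
  obtain ⟨En, Ep, g1, g2, g3, g4⟩ := spec_subspaces hM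
  have hfr : finrank ℝ (V → ℝ) = Fintype.card V := Module.finrank_pi ℝ
  rw [← g3]
  exact aux_key_eq (fun x => x ⬝ᵥ (M *ᵥ x)) g1 g2 h1 h2 (by omega) (by omega)

end Spec

/-! ### Graph lemmas about pendant vertices -/

section Graph
variable {n : ℕ} {G : SimpleGraph (Fin n)} {w : Fin n}

lemma adj_of_pendant {x : Fin n} (hx : G.neighborSet x = {w}) : G.Adj x w := by
  have : w ∈ G.neighborSet x := by rw [hx]; rfl
  exact this

lemma dist_pendant (hG : G.Connected) {x : Fin n} (hx : G.neighborSet x = {w})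
    {v : Fin n} (hv : v ≠ x) : G.dist x v = G.dist w v + 1 := by
  have hadj : G.Adj x w := adj_of_pendant hx
  have hub : G.dist x v ≤ G.dist w v + 1 := by
    have := hG.dist_triangle (u := x) (v := w) (w := v)
    have h1 : G.dist x w = 1 := SimpleGraph.dist_eq_one_iff_adj.mpr hadj
    omega
  have hlb : G.dist w v + 1 ≤ G.dist x v := by
    obtain ⟨q, hq⟩ := (hG.preconnected x v).exists_walk_length_eq_dist
    cases q with
    | nil => exact absurd rfl hv
    | @cons _ b _ h q' =>
      have hb : b = w := by
        have : b ∈ G.neighborSet x := h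
        rw [hx] at this; exact this
      have : G.dist w v ≤ q'.length := hb ▸ SimpleGraph.dist_le q'
      simp only [SimpleGraph.Walk.length_cons] at hq
      omega
  omega

/-- a path between vertices different from a pendant vertex `x` avoids `x`. -/
lemma pendant_not_mem_path {x : Fin n} (hx : G.neighborSet x = {w}) :
    ∀ {a b : Fin n} (q : G.Walk a b), q.IsPath → a ≠ x → b ≠ x → x ∉ q.support := by
  intro a b q
  induction q with
  | nil =>
    intro _ ha _
    simp [ne_comm.mp ha]
  | @cons a c b h' q ih =>
    intro hp ha hb
    rw [SimpleGraph.Walk.cons_isPath_iff] at hp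
    rw [SimpleGraph.Walk.support_cons, List.mem_cons]
    push_neg
    refine ⟨ne_comm.mp ha, ?_⟩
    by_cases hc : c = x
    · have haw : a = w := by
        have h3 : a ∈ G.neighborSet x := by rw [← hc]; exact h'.symm
        rw [hx] at h3; exact h3
      cases q with
      | nil => exact absurd hc hb
      | @cons _ d _ h2 q2 =>
        have hd : d = w := by
          have h4 : d ∈ G.neighborSet x := by rw [← hc]; exact h2
          rw [hx] at h4; exact h4
        exfalso
        apply hp.2
        rw [SimpleGraph.Walk.support_cons, List.mem_cons]
        right
        rw [haw, ← hd]
        exact q2.start_mem_support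
    · exact ih hp.1 hc hb
end Graph

section Lift
variable {n : ℕ} {G : SimpleGraph (Fin n)}

lemma walk_lift {s : Set (Fin n)} :
    ∀ {a b : Fin n} (q : G.Walk a b), (∀ y ∈ q.support, y ∈ s) → ∀ (ha : a ∈ s) (hb : b ∈ s),
    ∃ q' : (G.induce s).Walk ⟨a, ha⟩ ⟨b, hb⟩, q'.length = q.length := by
  intro a b q
  induction q with
  | nil => intro _ ha hb; exact ⟨SimpleGraph.Walk.nil, rfl⟩
  | @cons a c b h' q ih =>
    intro hs ha hb
    have hc : c ∈ s := hs c (by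
      rw [SimpleGraph.Walk.support_cons, List.mem_cons]
      exact Or.inr q.start_mem_support)
    have hs' : ∀ y ∈ q.support, y ∈ s := fun y hy => hs y
      (by rw [SimpleGraph.Walk.support_cons, List.mem_cons]; right; exact hy)
    obtain ⟨q', hq'⟩ := ih hs' hc hb
    have hadj : (G.induce s).Adj ⟨a, ha⟩ ⟨c, hc⟩ := by simpa using h'
    exact ⟨SimpleGraph.Walk.cons hadj q', by simp [hq']⟩

lemma dist_induce_eq (hG : G.Connected) {s : Set (Fin n)}
    (hsupp : ∀ (a b : Fin n) (q : G.Walk a b), q.IsPath → a ∈ s → b ∈ s →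
      ∀ y ∈ q.support, y ∈ s)
    (u v : ↥s) : (G.induce s).dist u v = G.dist ↑u ↑v := by
  classical
  obtain ⟨q, hq⟩ := (hG.preconnected ↑u ↑v).exists_walk_length_eq_dist
  have hsup : ∀ y ∈ q.bypass.support, y ∈ s :=
    hsupp _ _ q.bypass q.bypass_isPath u.2 v.2
  obtain ⟨q', hq'⟩ := walk_lift q.bypass hsup u.2 v.2
  have h1 : (G.induce s).dist u v ≤ G.dist ↑u ↑v := by
    have : (G.induce s).dist u v ≤ q'.length := SimpleGraph.dist_le q'
    have h2 := q.length_bypass_le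
    omega
  have h2 : G.dist ↑u ↑v ≤ (G.induce s).dist u v := by
    have hreach : (G.induce s).Reachable u v := ⟨q'⟩
    obtain ⟨r, hr⟩ := hreach.exists_walk_length_eq_dist
    have := SimpleGraph.dist_le (r.map (SimpleGraph.Embedding.induce s).toHom)
    rw [SimpleGraph.Walk.length_map, hr] at this
    exact this
  omega
end Lift

/-! ### The abstract quadratic form identity -/

lemma collapse {S : Type*} [Fintype S] [DecidableEq S] (st : S) (g : S → ℝ) :
    ∑ u, (if u = st then (1:ℝ) else 0) * g u = g st := by
  rw [Finset.sum_eq_single st]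
  · simp
  · intro b _ hb; simp [hb]
  · intro h; exact absurd (Finset.mem_univ st) h

lemma quad_identity {I S : Type*} [Fintype I] [DecidableEq I] [DecidableEq S] [Fintype S]
    (E : I ⊕ S → I ⊕ S → ℝ) (Dk : S → S → ℝ) (D : S → ℝ) (st : S) (K : ℝ) (hK : K ≠ 0)
    (hcard : (Fintype.card I : ℝ) = K - 1)
    (he1 : ∀ i j, E (.inl i) (.inl j) = if i = j then 0 else 4)
    (he2 : ∀ i v, E (.inl i) (.inr v) = (D v + 1)^2)
    (he2' : ∀ i v, E (.inr v) (.inl i) = (D v + 1)^2)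
    (he3 : ∀ u v, E (.inr u) (.inr v) = Dk u v)
    (hsym : ∀ u v, Dk u v = Dk v u)
    (he4 : ∀ v, Dk st v = if v = st then 0 else (D v + 1)^2)
    (hD : D st = 1)
    (y : I → ℝ) (x : S → ℝ) :
    (∑ q1, ∑ q2, Sum.elim (fun i => y i + x st / K)
        (fun u => x u - ((∑ i, y i) + (K-1)*(x st / K)) * (if u = st then 1 else 0)) q1
      * E q1 q2 *
      Sum.elim (fun i => y i + x st / K)
        (fun u => x u - ((∑ i, y i) + (K-1)*(x st / K)) * (if u = st then 1 else 0)) q2)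
    = (∑ u, ∑ v, x u * Dk u v * x v) + (4 - 4/K) * (x st)^2
      - 4*(∑ i, (y i)^2) - 4*(∑ i, y i)^2 := by
  set t : ℝ := x st / K with ht
  set A : ℝ := (∑ i, y i) + (K-1)*t with hA
  set a : I → ℝ := fun i => y i + t with ha
  set x' : S → ℝ := fun u => x u - A * (if u = st then 1 else 0) with hx'
  set ind : S → ℝ := fun u => if u = st then (1:ℝ) else 0 with hind
  have hindx' : ∀ u, x' u = x u - A * ind u := fun u => rfl
  set S1 : ℝ := ∑ v, (D v + 1)^2 * x v with hS1
  set QK : ℝ := ∑ u, ∑ v, x u * Dk u v * x v with hQK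
  set SA : ℝ := ∑ i, a i with hSA
  have hrow : ∑ v, (D v + 1)^2 * x' v = S1 - 4*A := by
    have : ∀ v, (D v + 1)^2 * x' v = (D v + 1)^2 * x v - (ind v) * ((D v + 1)^2 * A) := by
      intro v; rw [hindx']; simp only [hind]; by_cases h : v = st <;> simp [h] <;> ring
    rw [Finset.sum_congr rfl (fun v _ => this v), Finset.sum_sub_distrib, collapse st]
    simp only [hS1, hD]
    norm_num
  have hstrow : ∑ v, Dk st v * x v = S1 - 4 * x st := by
    have : ∀ v, Dk st v * x v = (D v + 1)^2 * x v - (ind v) * ((D v + 1)^2 * x v) := by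
      intro v; rw [he4]; simp only [hind]; by_cases h : v = st <;> simp [h]
    rw [Finset.sum_congr rfl (fun v _ => this v), Finset.sum_sub_distrib, collapse st, hD]
    norm_num
    exact hS1.symm
  have h4 : ∑ u, ∑ v, x' u * Dk u v * x' v = QK - 2*A*(S1 - 4*x st) := by
    have expand : ∀ u v, x' u * Dk u v * x' v =
        x u * Dk u v * x v - (ind u) * (A * (Dk u v * x v))
          - (ind v) * (A * (x u * Dk u v)) + (ind u) * (ind v) * (A^2 * Dk u v) := by
      intro u v; rw [hindx', hindx']; ring
    have coluv : ∑ u, ∑ v, (ind u) * (ind v) * (A^2 * Dk u v) = A^2 * Dk st st := by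
      have : ∀ u, ∑ v, (ind u) * (ind v) * (A^2 * Dk u v)
          = ind u * (A^2 * Dk u st) := by
        intro u
        have h := collapse st (fun v => ind u * (A^2 * Dk u v))
        rw [← h]
        apply Finset.sum_congr rfl; intro v _; ring
      rw [Finset.sum_congr rfl (fun u _ => this u), collapse st]
    have colu : ∑ u, ∑ v, (ind u) * (A * (Dk u v * x v)) = A * (S1 - 4 * x st) := by
      have : ∀ u, ∑ v, ind u * (A * (Dk u v * x v)) = ind u * (A * ∑ v, Dk u v * x v) := by
        intro u; rw [Finset.mul_sum, Finset.mul_sum]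
      rw [Finset.sum_congr rfl (fun u _ => this u), collapse st, hstrow]
    have colu2 : ∑ u, ∑ v, (ind v) * (A * (x u * Dk u v)) = A * (S1 - 4 * x st) := by
      have : ∀ u, ∑ v, ind v * (A * (x u * Dk u v)) = x u * (A * Dk st u) := by
        intro u
        have h : ∑ v, ind v * (A * (x u * Dk u v)) = A * (x u * Dk u st) :=
          collapse st (fun v => A * (x u * Dk u v))
        calc ∑ v, ind v * (A * (x u * Dk u v)) = A * (x u * Dk u st) := h
          _ = x u * (A * Dk st u) := by rw [hsym]; ring
      rw [Finset.sum_congr rfl (fun u _ => this u)]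
      have : ∀ u, x u * (A * Dk st u) = A * (Dk st u * x u) := fun u => by ring
      rw [Finset.sum_congr rfl (fun u _ => this u), ← Finset.mul_sum, hstrow]
    calc ∑ u, ∑ v, x' u * Dk u v * x' v
        = ∑ u, ∑ v, (x u * Dk u v * x v - (ind u) * (A * (Dk u v * x v))
          - (ind v) * (A * (x u * Dk u v)) + (ind u) * (ind v) * (A^2 * Dk u v)) := by
          apply Finset.sum_congr rfl; intro u _; apply Finset.sum_congr rfl; intro v _
          exact expand u v
      _ = QK - A * (S1 - 4*x st) - A * (S1 - 4*x st) + A^2 * Dk st st := by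
          simp only [Finset.sum_add_distrib, Finset.sum_sub_distrib]
          rw [colu, coluv]
          have : ∑ u, ∑ v, (ind v) * (A * (x u * Dk u v)) = A * (S1 - 4 * x st) := colu2
          rw [this, hQK]
      _ = QK - 2*A*(S1 - 4*x st) := by
          rw [he4 st, if_pos rfl]
          ring
  have h1 : ∑ i, ∑ j, a i * E (.inl i) (.inl j) * a j = 4*SA*SA - 4*(∑ i, (a i)^2) := by
    have expand : ∀ i j, a i * E (.inl i) (.inl j) * a j
        = 4 * (a i * a j) - (if i = j then 4 * (a j)^2 else 0) := by
      intro i j; rw [he1]; by_cases h : i = j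
      · subst h; rw [if_pos rfl, if_pos rfl]; ring
      · rw [if_neg h, if_neg h]; ring
    calc ∑ i, ∑ j, a i * E (.inl i) (.inl j) * a j
        = ∑ i, ∑ j, (4 * (a i * a j) - (if i = j then 4 * (a j)^2 else 0)) := by
          apply Finset.sum_congr rfl; intro i _; apply Finset.sum_congr rfl; intro j _
          exact expand i j
      _ = 4*SA*SA - 4*(∑ i, (a i)^2) := by
          simp only [Finset.sum_sub_distrib]
          congr 1
          · have : ∀ i, ∑ j, 4 * (a i * a j) = 4 * a i * SA := by
              intro i; rw [Finset.mul_sum]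
              apply Finset.sum_congr rfl; intro j _; ring
            rw [Finset.sum_congr rfl (fun i _ => this i)]
            rw [← Finset.sum_mul, ← Finset.mul_sum]
          · have : ∀ i, ∑ j, (if i = j then 4 * (a j)^2 else 0) = 4 * (a i)^2 := by
              intro i; rw [Finset.sum_ite_eq]; simp
            rw [Finset.sum_congr rfl (fun i _ => this i), Finset.mul_sum]
  have h2 : ∑ i, ∑ v, a i * E (.inl i) (.inr v) * x' v = SA * (S1 - 4*A) := by
    have : ∀ i, ∑ v, a i * E (.inl i) (.inr v) * x' v = a i * (S1 - 4*A) := by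
      intro i
      rw [← hrow, Finset.mul_sum]
      apply Finset.sum_congr rfl; intro v _; rw [he2]; ring
    rw [Finset.sum_congr rfl (fun i _ => this i), ← Finset.sum_mul]
  have h3 : ∑ v, ∑ i, x' v * E (.inr v) (.inl i) * a i = SA * (S1 - 4*A) := by
    have : ∀ v, ∑ i, x' v * E (.inr v) (.inl i) * a i = ((D v + 1)^2 * x' v) * SA := by
      intro v
      rw [Finset.mul_sum]
      apply Finset.sum_congr rfl; intro i _; rw [he2']; ring
    rw [Finset.sum_congr rfl (fun v _ => this v), ← Finset.sum_mul, hrow]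
    ring
  rw [Fintype.sum_sum_type]
  simp only [Fintype.sum_sum_type, Sum.elim_inl, Sum.elim_inr]
  rw [Finset.sum_add_distrib, Finset.sum_add_distrib]
  have hSA_A : SA = A := by
    rw [hSA, hA, ha]
    rw [Finset.sum_add_distrib, Finset.sum_const, Finset.card_univ, nsmul_eq_mul, hcard]
  have hsq : ∑ i, (a i)^2 = (∑ i, (y i)^2) + 2*t*(∑ i, y i) + (K-1)*t^2 := by
    have : ∀ i, (a i)^2 = (y i)^2 + 2*t*(y i) + t^2 := by intro i; rw [ha]; ring
    rw [Finset.sum_congr rfl (fun i _ => this i), Finset.sum_add_distrib,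
      Finset.sum_add_distrib, Finset.sum_const, Finset.card_univ, nsmul_eq_mul, hcard,
      ← Finset.mul_sum]
  have hxst : x st = K * t := by rw [ht]; field_simp
  rw [h1, h2, h3]
  have hE3sum : ∑ u, ∑ v, x' u * E (.inr u) (.inr v) * x' v
      = ∑ u, ∑ v, x' u * Dk u v * x' v := by
    apply Finset.sum_congr rfl; intro u _; apply Finset.sum_congr rfl; intro v _
    rw [he3]
  rw [hE3sum]
  rw [hxst] at h4 ⊢
  rw [h4, hSA_A, hsq, hA]
  field_simp
  ring

/-- attaching `k ≥ 2` pendant vertices `p 0, …, p (k-1)` to a vertex `w`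
of a connected graph `G'` (the induced subgraph of `G` on the non-pendant vertices). -/
theorem stmt0 {n k : ℕ} (hk : 2 ≤ k)
    (G : SimpleGraph (Fin n)) (hG : G.Connected)
    (w : Fin n) (p : Fin k → Fin n) (hp : Function.Injective p)
    (hw : ∀ i, p i ≠ w)
    (hpend : ∀ i, G.neighborSet (p i) = {w})
    (hG' : (G.induce {v : Fin n | ∀ i : Fin k, v ≠ p i}).Connected) :
    iNeg (distSqMatrix G) =
      (k - 1) +
      iNeg (distSqMatrix (G.induce {v : Fin n | ∀ i : Fin k, (i : ℕ) < k - 1 → v ≠ p i}) +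
        (4 - 4 / (k : ℝ)) •
          Matrix.vecMulVec
            (fun v : {v : Fin n | ∀ i : Fin k, (i : ℕ) < k - 1 → v ≠ p i} =>
              if (v : Fin n) = p ⟨k - 1, by omega⟩ then (1 : ℝ) else 0)
            (fun v : {v : Fin n | ∀ i : Fin k, (i : ℕ) < k - 1 → v ≠ p i} =>
              if (v : Fin n) = p ⟨k - 1, by omega⟩ then (1 : ℝ) else 0)) := by
  classical
  have hkR : ((k:ℝ)) ≠ 0 := Nat.cast_ne_zero.mpr (by omega)
  have hk1 : k - 1 ≤ k := Nat.sub_le k 1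
  set kk : Fin k := ⟨k - 1, by omega⟩ with hkk
  set S0 : Set (Fin n) := {v : Fin n | ∀ i : Fin k, (i : ℕ) < k - 1 → v ≠ p i} with hS0
  -- basic pendant distance facts
  have h_pd : ∀ (i : Fin k) (v : Fin n), v ≠ p i → G.dist (p i) v = G.dist w v + 1 :=
    fun i v hv => dist_pendant hG (hpend i) hv
  have h_dw : ∀ i : Fin k, G.dist w (p i) = 1 := fun i => by
    rw [SimpleGraph.dist_comm]
    exact SimpleGraph.dist_eq_one_iff_adj.mpr (adj_of_pendant (hpend i))
  have h_pp : ∀ i j : Fin k, i ≠ j → G.dist (p i) (p j) = 2 := by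
    intro i j hij
    rw [h_pd i (p j) (fun h => hij (hp h).symm), h_dw j]
  -- paths between vertices of S0 stay within S0
  have hsupp : ∀ (a b : Fin n) (q : G.Walk a b), q.IsPath → a ∈ S0 → b ∈ S0 →
      ∀ y ∈ q.support, y ∈ S0 := by
    intro a b q hq ha hb y hy i hik hyp
    have := pendant_not_mem_path (hpend i) q hq (ha i hik) (hb i hik)
    rw [hyp] at hy
    exact this hy
  have hdistS : ∀ u v : ↥S0, (G.induce S0).dist u v = G.dist ↑u ↑v :=
    dist_induce_eq hG hsupp
  have hsstar : p kk ∈ S0 := by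
    intro i hik hEq
    have h2 := congrArg Fin.val (hp hEq)
    simp only [hkk] at h2
    omega
  set st : ↥S0 := ⟨p kk, hsstar⟩ with hst
  -- the decomposition equivalence
  set f : Fin (k-1) ⊕ ↥S0 → Fin n :=
    Sum.elim (fun i => p (Fin.castLE hk1 i)) (fun v => (v : Fin n)) with hf
  have hfinj : Function.Injective f := by
    rintro (i | u) (j | v) hEq
    · simp only [hf, Sum.elim_inl] at hEq
      exact congrArg Sum.inl (Fin.castLE_injective hk1 (hp hEq))
    · exfalso
      simp only [hf, Sum.elim_inl, Sum.elim_inr] at hEq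
      exact v.2 (Fin.castLE hk1 i) (by simpa using i.isLt) hEq.symm
    · exfalso
      simp only [hf, Sum.elim_inl, Sum.elim_inr] at hEq
      exact u.2 (Fin.castLE hk1 j) (by simpa using j.isLt) hEq
    · simp only [hf, Sum.elim_inr] at hEq
      exact congrArg Sum.inr (Subtype.ext hEq)
  have hfsurj : Function.Surjective f := by
    intro v
    by_cases h : v ∈ S0
    · exact ⟨Sum.inr ⟨v, h⟩, rfl⟩
    · simp only [hS0, Set.mem_setOf_eq] at h
      push_neg at h
      obtain ⟨i, hik, hv⟩ := h
      refine ⟨Sum.inl ⟨(i : ℕ), hik⟩, ?_⟩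
      simp only [hf, Sum.elim_inl]
      rw [hv]
      congr 1
  set σ : (Fin (k-1) ⊕ ↥S0) ≃ Fin n := Equiv.ofBijective f ⟨hfinj, hfsurj⟩ with hσ
  have hcardS : (k-1) + Fintype.card ↥S0 = n := by
    have := Fintype.card_congr σ
    simpa [Fintype.card_sum] using this
  -- matrices
  set Δ : Matrix (Fin n) (Fin n) ℝ := distSqMatrix G with hΔdef
  set Δk : Matrix ↥S0 ↥S0 ℝ := distSqMatrix (G.induce S0) with hΔkdef
  set c : ℝ := 4 - 4/(k:ℝ) with hc
  set ev : ↥S0 → ℝ := fun v => if (v : Fin n) = p kk then 1 else 0 with hev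
  set N : Matrix ↥S0 ↥S0 ℝ := Δk + c • Matrix.vecMulVec ev ev with hN
  have hevst : ∀ u : ↥S0, ev u = if u = st then 1 else 0 := by
    intro u
    by_cases h : u = st
    · subst h; simp [hev, hst]
    · have : (u : Fin n) ≠ p kk := fun hEq => h (Subtype.ext hEq)
      simp [hev, h, this]
  have hΔherm : Δ.IsHermitian := by
    ext i j
    simp only [hΔdef, distSqMatrix, conjTranspose_apply, Matrix.of_apply, star_trivial]
    rw [SimpleGraph.dist_comm]
  have hNherm : N.IsHermitian := by
    ext i j
    simp only [hN, hΔkdef, distSqMatrix, conjTranspose_apply, Matrix.add_apply,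
      Matrix.smul_apply, Matrix.of_apply, vecMulVec_apply, star_trivial, smul_eq_mul]
    rw [SimpleGraph.dist_comm]
    ring
  -- entry computations
  set Dv : ↥S0 → ℝ := fun v => (G.dist w ↑v : ℝ) with hDv
  have hE1 : ∀ i j : Fin (k-1), Δ (f (Sum.inl i)) (f (Sum.inl j)) = if i = j then 0 else 4 := by
    intro i j
    by_cases h : i = j
    · subst h
      simp [hΔdef, distSqMatrix, hf, SimpleGraph.dist_self]
    · rw [if_neg h]
      show ((G.dist (p (Fin.castLE hk1 i)) (p (Fin.castLE hk1 j)) : ℕ) : ℝ)^2 = 4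
      rw [h_pp _ _ (fun hc => h (Fin.castLE_injective hk1 hc))]
      norm_num
  have hE2 : ∀ (i : Fin (k-1)) (v : ↥S0), Δ (f (Sum.inl i)) (f (Sum.inr v)) = (Dv v + 1)^2 := by
    intro i v
    have hne : (v : Fin n) ≠ p (Fin.castLE hk1 i) :=
      v.2 (Fin.castLE hk1 i) (by simpa using i.isLt)
    show ((G.dist (p (Fin.castLE hk1 i)) ↑v : ℕ) : ℝ)^2 = _
    rw [h_pd _ _ hne]
    push_cast
    ring
  have hE2' : ∀ (i : Fin (k-1)) (v : ↥S0), Δ (f (Sum.inr v)) (f (Sum.inl i)) = (Dv v + 1)^2 := by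
    intro i v
    show ((G.dist ↑v (p (Fin.castLE hk1 i)) : ℕ) : ℝ)^2 = _
    rw [SimpleGraph.dist_comm]
    exact hE2 i v
  have hE3 : ∀ u v : ↥S0, Δ (f (Sum.inr u)) (f (Sum.inr v)) = Δk u v := by
    intro u v
    show ((G.dist ↑u ↑v : ℕ) : ℝ)^2 = ((G.induce S0).dist u v : ℝ)^2
    rw [hdistS]
  have hΔksym : ∀ u v : ↥S0, Δk u v = Δk v u := by
    intro u v
    show ((G.induce S0).dist u v : ℝ)^2 = ((G.induce S0).dist v u : ℝ)^2
    rw [SimpleGraph.dist_comm]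
  have hE4 : ∀ v : ↥S0, Δk st v = if v = st then 0 else (Dv v + 1)^2 := by
    intro v
    by_cases h : v = st
    · subst h
      simp [hΔkdef, distSqMatrix, SimpleGraph.dist_self]
    · rw [if_neg h]
      have hne : (v : Fin n) ≠ p kk := fun hEq => h (Subtype.ext hEq)
      show ((G.induce S0).dist st v : ℝ)^2 = _
      rw [hdistS]
      show ((G.dist (p kk) ↑v : ℕ) : ℝ)^2 = _
      rw [h_pd _ _ hne]
      push_cast
      ring
  have hDst : Dv st = 1 := by
    show ((G.dist w (p kk) : ℕ) : ℝ) = 1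
    rw [h_dw kk]
    norm_num
  have hcardI : ((Fintype.card (Fin (k-1)) : ℝ)) = (k:ℝ) - 1 := by
    rw [Fintype.card_fin, Nat.cast_sub (by omega), Nat.cast_one]
  -- the congruence linear map T
  set AA : (Fin (k-1) → ℝ) × (↥S0 → ℝ) → ℝ :=
    fun yx => (∑ i, yx.1 i) + ((k:ℝ)-1) * (yx.2 st / (k:ℝ)) with hAA
  set Tfun : (Fin (k-1) → ℝ) × (↥S0 → ℝ) → (Fin n → ℝ) :=
    fun yx => fun vtx => Sum.elim (fun i => yx.1 i + yx.2 st / (k:ℝ))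
      (fun u => yx.2 u - AA yx * (if u = st then 1 else 0)) (σ.symm vtx) with hTfun
  have hTadd : ∀ a b, Tfun (a + b) = Tfun a + Tfun b := by
    intro a b
    funext vtx
    simp only [hTfun, hAA, Pi.add_apply, Prod.fst_add, Prod.snd_add, Finset.sum_add_distrib]
    cases σ.symm vtx with
    | inl i => simp only [Sum.elim_inl]; ring
    | inr u => simp only [Sum.elim_inr]; ring
  have hTsmul : ∀ (r : ℝ) a, Tfun (r • a) = r • Tfun a := by
    intro r a
    funext vtx
    simp only [hTfun, hAA, Pi.smul_apply, Prod.smul_fst, Prod.smul_snd, smul_eq_mul,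
      ← Finset.mul_sum]
    cases σ.symm vtx with
    | inl i => simp only [Sum.elim_inl]; ring
    | inr u => simp only [Sum.elim_inr]; ring
  set T : ((Fin (k-1) → ℝ) × (↥S0 → ℝ)) →ₗ[ℝ] (Fin n → ℝ) :=
    { toFun := Tfun, map_add' := hTadd, map_smul' := hTsmul } with hT
  have hz : ∀ (yx : (Fin (k-1) → ℝ) × (↥S0 → ℝ)) (q : Fin (k-1) ⊕ ↥S0),
      T yx (σ q) = Sum.elim (fun i => yx.1 i + yx.2 st / (k:ℝ))
        (fun u => yx.2 u - AA yx * (if u = st then 1 else 0)) q := by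
    intro yx q
    show Sum.elim _ _ (σ.symm (σ q)) = _
    rw [Equiv.symm_apply_apply]
  have hTinj : Function.Injective T := by
    rw [← LinearMap.ker_eq_bot, LinearMap.ker_eq_bot']
    intro yx h0
    have hv : ∀ q, T yx (σ q) = 0 := fun q => by rw [h0]; rfl
    have hy : ∀ i : Fin (k-1), yx.1 i + yx.2 st / (k:ℝ) = 0 := by
      intro i
      have := hv (Sum.inl i)
      rwa [hz] at this
    have hx : ∀ u : ↥S0, yx.2 u - AA yx * (if u = st then 1 else 0) = 0 := by
      intro u
      have := hv (Sum.inr u)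
      rwa [hz] at this
    have hA0 : AA yx = 0 := by
      have hsum : ∑ i : Fin (k-1), (yx.1 i + yx.2 st / (k:ℝ)) = 0 :=
        Finset.sum_eq_zero (fun i _ => hy i)
      rw [Finset.sum_add_distrib, Finset.sum_const, Finset.card_univ, nsmul_eq_mul,
        hcardI] at hsum
      rw [hAA]
      linarith
    have hxst0 : yx.2 st = 0 := by
      have := hx st
      rw [if_pos rfl, hA0] at this
      linarith
    have hx0 : yx.2 = 0 := by
      funext u
      have := hx u
      rw [hA0] at this
      simpa using this
    have hy0 : yx.1 = 0 := by
      funext i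
      have := hy i
      rw [hxst0] at this
      simpa using this
    exact Prod.ext hy0 hx0
  -- the quadratic identity
  have hNform : ∀ x : ↥S0 → ℝ,
      x ⬝ᵥ (N *ᵥ x) = (∑ u, ∑ v, x u * Δk u v * x v) + c * (x st)^2 := by
    intro x
    rw [hN, add_mulVec, dotProduct_add]
    congr 1
    · simp only [dotProduct, mulVec, dotProduct]
      apply Finset.sum_congr rfl
      intro u _
      rw [Finset.mul_sum]
      exact Finset.sum_congr rfl fun v _ => (mul_assoc _ _ _).symm
    · rw [smul_mulVec, dotProduct_smul, smul_eq_mul]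
      have h1 : vecMulVec ev ev *ᵥ x = fun u => ev u * (x st) := by
        funext u
        simp only [mulVec, vecMulVec_apply, dotProduct]
        have : ∀ v, ev u * ev v * x v = ev u * ((if v = st then (1:ℝ) else 0) * x v) := by
          intro v; rw [hevst, hevst]; ring
        rw [Finset.sum_congr rfl (fun v _ => this v), ← Finset.mul_sum, collapse st]
      rw [h1]
      have h2 : x ⬝ᵥ (fun u => ev u * x st) = x st * x st := by
        simp only [dotProduct]
        have : ∀ u, x u * (ev u * x st) = (if u = st then (1:ℝ) else 0) * (x u * x st) := by
          intro u; rw [hevst]; ring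
        rw [Finset.sum_congr rfl (fun u _ => this u), collapse st]
      rw [h2]
      ring
  have hQI : ∀ yx : (Fin (k-1) → ℝ) × (↥S0 → ℝ),
      T yx ⬝ᵥ (Δ *ᵥ T yx) = yx.2 ⬝ᵥ (N *ᵥ yx.2)
        - 4*(∑ i, (yx.1 i)^2) - 4*(∑ i, yx.1 i)^2 := by
    intro yx
    have hdouble : T yx ⬝ᵥ (Δ *ᵥ T yx)
        = ∑ q1, ∑ q2, Sum.elim (fun i => yx.1 i + yx.2 st / (k:ℝ))
            (fun u => yx.2 u - AA yx * (if u = st then 1 else 0)) q1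
          * Δ (σ q1) (σ q2) *
          Sum.elim (fun i => yx.1 i + yx.2 st / (k:ℝ))
            (fun u => yx.2 u - AA yx * (if u = st then 1 else 0)) q2 := by
      calc T yx ⬝ᵥ (Δ *ᵥ T yx)
          = ∑ v, T yx v * ∑ u, Δ v u * T yx u := by
            simp only [dotProduct, mulVec, dotProduct]
        _ = ∑ q1, T yx (σ q1) * ∑ u, Δ (σ q1) u * T yx u :=
            (Equiv.sum_comp σ (fun v => T yx v * ∑ u, Δ v u * T yx u)).symm
        _ = _ := by
            apply Finset.sum_congr rfl
            intro q1 _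
            rw [← Equiv.sum_comp σ (fun u => Δ (σ q1) u * T yx u), Finset.mul_sum]
            apply Finset.sum_congr rfl
            intro q2 _
            rw [hz, hz]
            ring
    rw [hdouble, hNform]
    have := quad_identity (fun q1 q2 => Δ (σ q1) (σ q2)) (fun u v => Δk u v) Dv st
      ((k:ℝ)) hkR hcardI hE1 hE2 hE2' hE3 hΔksym hE4 hDst yx.1 yx.2
    rw [hc]
    exact this
  -- assemble the subspaces
  obtain ⟨Un, Up, g1, g2, g3, g4⟩ := spec_subspaces hNherm
  set Wn : Submodule ℝ (Fin n → ℝ) :=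
    Submodule.map T ((⊤ : Submodule ℝ (Fin (k-1) → ℝ)).prod Un) with hWn
  set Wp : Submodule ℝ (Fin n → ℝ) :=
    Submodule.map T ((⊥ : Submodule ℝ (Fin (k-1) → ℝ)).prod Up) with hWp
  have hWnneg : ∀ z ∈ Wn, z ≠ 0 → z ⬝ᵥ (Δ *ᵥ z) < 0 := by
    rintro z ⟨yx, hyx, rfl⟩ hz0
    have hx2 : yx.2 ∈ Un := hyx.2
    rw [hQI yx]
    have hyx0 : yx ≠ 0 := fun h => hz0 (by rw [h]; exact map_zero T)
    by_cases hx : yx.2 = 0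
    · have hzero : yx.2 ⬝ᵥ (N *ᵥ yx.2) = 0 := by rw [hx]; simp
      have hy0 : yx.1 ≠ 0 := by
        intro h
        exact hyx0 (Prod.ext h hx)
      obtain ⟨i0, hi0⟩ := Function.ne_iff.mp hy0
      have hpos : 0 < ∑ i, (yx.1 i)^2 := by
        apply Finset.sum_pos'
        · intro i _; exact sq_nonneg _
        · exact ⟨i0, Finset.mem_univ _, pow_two_pos_of_ne_zero hi0⟩
      rw [hzero]
      have hsq2 : (0:ℝ) ≤ (∑ i, yx.1 i)^2 := sq_nonneg _
      linarith
    · have hneg := g1 yx.2 hx2 hx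
      have hsq1 : (0:ℝ) ≤ ∑ i, (yx.1 i)^2 :=
        Finset.sum_nonneg (fun i _ => sq_nonneg (yx.1 i))
      have hsq2 : (0:ℝ) ≤ (∑ i, yx.1 i)^2 := sq_nonneg _
      linarith
  have hWppos : ∀ z ∈ Wp, 0 ≤ z ⬝ᵥ (Δ *ᵥ z) := by
    rintro z ⟨yx, hyx, rfl⟩
    have hx1 : yx.1 = 0 := by
      have := hyx.1
      simpa using this
    rw [hQI yx, hx1]
    have := g2 yx.2 hyx.2
    simp only [Pi.zero_apply]
    have hz1 : ∑ i : Fin (k-1), (0:ℝ)^2 = 0 := by simp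
    have hz2 : ∑ i : Fin (k-1), (0:ℝ) = 0 := by simp
    rw [hz1, hz2]
    norm_num
    exact this
  have hrankWn : Module.finrank ℝ Wn = (k-1) + iNeg N := by
    rw [hWn, ← LinearEquiv.finrank_eq (Submodule.equivMapOfInjective T hTinj _),
      finrank_prod_submodule, finrank_top, Module.finrank_pi, Fintype.card_fin, g3]
  have hrankWp : Module.finrank ℝ Wp = Fintype.card ↥S0 - iNeg N := by
    rw [hWp, ← LinearEquiv.finrank_eq (Submodule.equivMapOfInjective T hTinj _),
      finrank_prod_submodule, finrank_bot, zero_add]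
    omega
  have hmain : iNeg Δ = Module.finrank ℝ Wn := by
    apply iNeg_eq_finrank hΔherm hWnneg hWppos
    rw [hrankWn, hrankWp, Fintype.card_fin]
    omega
  rw [hΔdef] at hmain
  rw [hmain, hrankWn]
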